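/- Let p be prime, 2 ≤ s < p, and τ = (1 2 … p) ∈ S_{p+s}. Let θ ∈ S_p ⊂ S_{p+s} be a permutation of {1,…,p} of order p-1 with θτθ⁻¹ = τ^a for a generator a of (ℤ/p)^×, and let H_s ⊂ S_{p+s} be the subgroup of permutations fixing {1,…,p} pointwise (permuting only {p+1,…,p+s}). Then N_{A_{p+s}}(⟨τ⟩) = A_{p+s} ∩ ((⟨τ⟩ ⋊ ⟨θ⟩) × H_s). -/

import Mathlib

open Equiv Equiv.Perm Subgroup

/-- Let `p` be prime, `2 ≤ s < p`, `τ = (1 2 … p) ∈ S_{p+s}` a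
`p`-cycle supported on the first `p` points, `θ` a permutation of the first `p`
points of order `p-1` with `θτθ⁻¹ = τ^a` for a generator `a` of `(ℤ/p)ˣ`, and
`H_s` the subgroup of permutations fixing the first `p` points pointwise.  Then
`N_{A_{p+s}}(⟨τ⟩) = A_{p+s} ∩ ((⟨τ⟩ ⋊ ⟨θ⟩) × H_s)`, the internal product being
the join `⟨τ⟩ ⊔ ⟨θ⟩ ⊔ H_s` of subgroups of `S_{p+s}`. -/
theorem normalizer_in_alternating (p s : ℕ) (hp : p.Prime) (hs2 : 2 ≤ s) (hsp : s < p)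
    (τ θ : Equiv.Perm (Fin (p + s)))
    (hcyc : τ.IsCycle) (hcard : τ.support.card = p)
    (hτsupp : ∀ x : Fin (p + s), p ≤ x.val → τ x = x)
    (hθsupp : ∀ x : Fin (p + s), p ≤ x.val → θ x = x)
    (hθord : orderOf θ = p - 1)
    (a : (ZMod p)ˣ) (ha : orderOf a = p - 1)
    (hconj : θ * τ * θ⁻¹ = τ ^ ((a : ZMod p).val))
    (H : Subgroup (Equiv.Perm (Fin (p + s))))
    (hH : ∀ g : Equiv.Perm (Fin (p + s)), g ∈ H ↔ ∀ x : Fin (p + s), x.val < p → g x = x) :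
    Subgroup.normalizer (Subgroup.zpowers τ : Set (Equiv.Perm (Fin (p + s)))) ⊓ alternatingGroup (Fin (p + s))
      = alternatingGroup (Fin (p + s)) ⊓
        (Subgroup.zpowers τ ⊔ Subgroup.zpowers θ ⊔ H) := by
  haveI : Fact p.Prime := ⟨hp⟩
  haveI : Fact (1 < p) := ⟨hp.one_lt⟩
  have hτord : orderOf τ = p := by rw [hcyc.orderOf, hcard]
  have hτne1 : τ ≠ 1 := hcyc.ne_one
  -- support of τ is the set of low points
  set L : Finset (Fin (p + s)) := Finset.univ.filter (fun x => x.val < p) with hL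
  have hLcard : L.card = p := by
    have he : {x : Fin (p + s) // x.val < p} ≃ Fin p :=
      { toFun := fun x => ⟨x.1.val, x.2⟩
        invFun := fun i => ⟨⟨i.val, lt_of_lt_of_le i.isLt (Nat.le_add_right p s)⟩, i.isLt⟩
        left_inv := fun x => rfl
        right_inv := fun i => rfl }
    rw [hL, ← Fintype.card_subtype, Fintype.card_congr he, Fintype.card_fin]
  have hsupp : τ.support = L := by
    apply Finset.eq_of_subset_of_card_le
    · intro x hx
      simp only [hL, Finset.mem_filter, Finset.mem_univ, true_and]
      by_contra hc
      push_neg at hc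
      exact (Equiv.Perm.mem_support.mp hx) (hτsupp x hc)
    · rw [hLcard, hcard]
  -- key exponent facts
  have hmk : θ * τ ^ ((a⁻¹ : (ZMod p)ˣ) : ZMod p).val * θ⁻¹ = τ := by
    rw [← conj_pow, hconj, ← pow_mul]
    conv_rhs => rw [← pow_one τ]
    rw [pow_eq_pow_iff_modEq, hτord]
    have h1 : ((a : ZMod p) * ((a⁻¹ : (ZMod p)ˣ) : ZMod p)).val = 1 := by
      rw [← Units.val_mul, mul_inv_cancel, Units.val_one, ZMod.val_one]
    rw [ZMod.val_mul] at h1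
    calc (a : ZMod p).val * ((a⁻¹ : (ZMod p)ˣ) : ZMod p).val
        ≡ (a : ZMod p).val * ((a⁻¹ : (ZMod p)ˣ) : ZMod p).val % p [MOD p] :=
          (Nat.mod_modEq _ p).symm
      _ = 1 := h1
  have hθinv : θ⁻¹ * τ * θ = τ ^ ((a⁻¹ : (ZMod p)ˣ) : ZMod p).val := by
    calc θ⁻¹ * τ * θ
        = θ⁻¹ * (θ * τ ^ ((a⁻¹ : (ZMod p)ˣ) : ZMod p).val * θ⁻¹) * θ := by rw [hmk]
      _ = τ ^ ((a⁻¹ : (ZMod p)ˣ) : ZMod p).val := by group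
  -- first high-fixing helpers
  have highfix_inv : ∀ (σ : Equiv.Perm (Fin (p + s))), (∀ x : Fin (p + s), p ≤ x.val → σ x = x) →
      ∀ x : Fin (p + s), p ≤ x.val → σ⁻¹ x = x := by
    intro σ hσ x hx
    apply σ.injective
    rw [Equiv.Perm.coe_inv, Equiv.apply_symm_apply, hσ x hx]
  -- H elements commute with τ
  have hHcomm : ∀ h' : Equiv.Perm (Fin (p + s)),
      (∀ x : Fin (p + s), x.val < p → h' x = x) → Commute h' τ := by
    intro h' hfix
    apply Equiv.Perm.Disjoint.commute
    intro x
    by_cases hx : x.val < p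
    · exact Or.inl (hfix x hx)
    · exact Or.inr (hτsupp x (le_of_not_gt hx))
  -- the join equals the full normalizer
  have keyEq : Subgroup.zpowers τ ⊔ Subgroup.zpowers θ ⊔ H = Subgroup.normalizer (Subgroup.zpowers τ : Set (Equiv.Perm (Fin (p + s)))) := by
    apply le_antisymm
    · refine sup_le (sup_le Subgroup.le_normalizer ?_) ?_
      · rw [Subgroup.zpowers_le]
        rw [Subgroup.mem_normalizer_iff]
        intro h'
        constructor
        · intro hmem
          obtain ⟨n, hn⟩ := Subgroup.mem_zpowers_iff.mp hmem
          apply Subgroup.mem_zpowers_iff.mpr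
          refine ⟨((a : ZMod p).val : ℤ) * n, ?_⟩
          rw [← hn, zpow_mul, zpow_natCast, ← hconj, conj_zpow]
        · intro hmem
          obtain ⟨n, hn⟩ := Subgroup.mem_zpowers_iff.mp hmem
          apply Subgroup.mem_zpowers_iff.mpr
          refine ⟨(((a⁻¹ : (ZMod p)ˣ) : ZMod p).val : ℤ) * n, ?_⟩
          have hh2 : h' = θ⁻¹ * τ ^ n * θ := by rw [hn]; group
          have hcz2 : (θ⁻¹ * τ * θ) ^ (n : ℤ) = θ⁻¹ * τ ^ (n : ℤ) * θ := by
            have h5 := conj_zpow (i := n) (a := θ⁻¹) (b := τ)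
            rwa [inv_inv] at h5
          rw [hh2, zpow_mul, zpow_natCast, ← hθinv, hcz2]
      · intro h' hh'
        rw [Subgroup.mem_normalizer_iff]
        have hc : Commute h' τ := hHcomm h' ((hH h').mp hh')
        intro g
        constructor
        · intro hmem
          obtain ⟨n, hn⟩ := Subgroup.mem_zpowers_iff.mp hmem
          apply Subgroup.mem_zpowers_iff.mpr
          refine ⟨n, ?_⟩
          rw [← hn, (hc.zpow_right n).eq]; group
        · intro hmem
          obtain ⟨n, hn⟩ := Subgroup.mem_zpowers_iff.mp hmem
          apply Subgroup.mem_zpowers_iff.mpr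
          refine ⟨n, ?_⟩
          have h2 : g = h'⁻¹ * τ ^ n * h' := by rw [hn]; group
          have h3 : h'⁻¹ * τ ^ n * h' = τ ^ n := by
            rw [mul_assoc, ← (hc.zpow_right n).eq, inv_mul_cancel_left]
          rw [h2, h3]
    · intro g hg
      rw [Subgroup.mem_normalizer_iff] at hg
      have h1 : g * τ * g⁻¹ ∈ Subgroup.zpowers τ := (hg τ).mp (Subgroup.mem_zpowers τ)
      obtain ⟨nk, hnk⟩ := (Submonoid.mem_powers_iff _ _).mp (mem_powers_iff_mem_zpowers.mpr h1)
      set k := nk % p with hk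
      have hτk : τ ^ k = g * τ * g⁻¹ := by
        rw [← hnk, pow_eq_pow_iff_modEq, hτord]
        exact Nat.mod_modEq nk p
      have hklt : k < p := Nat.mod_lt _ hp.pos
      have hkne : k ≠ 0 := by
        intro h0
        rw [h0, pow_zero] at hτk
        apply hτne1
        have h5 : τ = g⁻¹ * (g * τ * g⁻¹) * g := by group
        rw [h5, ← hτk]; group
      -- g preserves the support
      have hcop : Nat.Coprime k (orderOf τ) := by
        rw [hτord]
        exact Nat.Coprime.symm
          (hp.coprime_iff_not_dvd.mpr (fun hdvd => hkne (Nat.eq_zero_of_dvd_of_lt hdvd hklt)))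
      have hmap : τ.support.map g.toEmbedding = τ.support := by
        have h2 := Equiv.Perm.support_conj (σ := g) (τ := τ)
        rw [← hτk, Equiv.Perm.support_pow_coprime hcop] at h2
        exact h2.symm
      have hgP : ∀ x : Fin (p + s), x.val < p ↔ (g x).val < p := by
        intro x
        have h1' : x ∈ τ.support ↔ g x ∈ τ.support.map g.toEmbedding := by
          simp [Finset.mem_map']
        rw [hmap, hsupp] at h1'
        simpa [hL] using h1'
      set g₁ := Equiv.Perm.ofSubtype (g.subtypePerm (p := fun y : Fin (p + s) => y.val < p) (fun x => (hgP x).symm)) with hg₁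
      have hg₁low : ∀ x : Fin (p + s), x.val < p → g₁ x = g x := by
        intro x hx
        rw [hg₁, Equiv.Perm.ofSubtype_apply_of_mem (g.subtypePerm (p := fun y : Fin (p + s) => y.val < p) (fun x => (hgP x).symm)) hx]
        simp [Equiv.Perm.subtypePerm_apply]
      have hg₁high : ∀ x : Fin (p + s), p ≤ x.val → g₁ x = x := by
        intro x hx
        exact Equiv.Perm.ofSubtype_apply_of_not_mem _ (not_lt.mpr hx)
      set h' := g₁⁻¹ * g with hh'
      have hh'fix : ∀ x : Fin (p + s), x.val < p → h' x = x := by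
        intro x hx
        rw [hh']
        show g₁⁻¹ (g x) = x
        apply g₁.injective
        rw [Equiv.Perm.coe_inv, Equiv.apply_symm_apply, hg₁low x hx]
      have hh'H : h' ∈ H := (hH h').mpr hh'fix
      have hcommh : Commute h' τ := hHcomm h' hh'fix
      have hg_eq : g = g₁ * h' := by rw [hh']; group
      have hg₁conj : g₁ * τ * g₁⁻¹ = τ ^ k := by
        rw [hτk, hg_eq]
        have hstep : h' * τ * h'⁻¹ = τ := by rw [hcommh.eq]; group
        calc g₁ * τ * g₁⁻¹ = g₁ * (h' * τ * h'⁻¹) * g₁⁻¹ := by rw [hstep]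
          _ = (g₁ * h') * τ * (g₁ * h')⁻¹ := by group
      -- find j with a^j ≡ k
      have hkunit : IsUnit (k : ZMod p) := by
        apply Ne.isUnit
        rw [Ne, ZMod.natCast_eq_zero_iff]
        intro hdvd
        exact hkne (Nat.eq_zero_of_dvd_of_lt hdvd hklt)
      obtain ⟨u, hu⟩ := hkunit
      have htop : u ∈ Subgroup.zpowers a := by
        have hcards : Nat.card (Subgroup.zpowers a) = Nat.card (ZMod p)ˣ := by
          rw [Nat.card_zpowers, ha, Nat.card_eq_fintype_card, ZMod.card_units]
        rw [Subgroup.eq_top_of_card_eq _ hcards]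
        trivial
      obtain ⟨j, hj⟩ := (Submonoid.mem_powers_iff _ _).mp (mem_powers_iff_mem_zpowers.mpr htop)
      have hconjpow : ∀ i : ℕ, θ ^ i * τ * (θ ^ i)⁻¹ = τ ^ (((a : ZMod p) ^ i).val) := by
        intro i
        induction i with
        | zero => simp [ZMod.val_one]
        | succ i ih =>
          have hrw : θ ^ (i + 1) * τ * (θ ^ (i + 1))⁻¹ = θ * (θ ^ i * τ * (θ ^ i)⁻¹) * θ⁻¹ := by
            rw [pow_succ']; group
          rw [hrw, ih, ← conj_pow, hconj, ← pow_mul]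
          rw [pow_eq_pow_iff_modEq, hτord]
          have hval : ((a : ZMod p) ^ (i + 1)).val
              = (((a : ZMod p) ^ i).val * (a : ZMod p).val) % p := by
            rw [pow_succ, ZMod.val_mul]
          calc (a : ZMod p).val * ((a : ZMod p) ^ i).val
              ≡ ((a : ZMod p).val * ((a : ZMod p) ^ i).val) % p [MOD p] := (Nat.mod_modEq _ p).symm
            _ = ((a : ZMod p) ^ (i + 1)).val := by rw [hval, Nat.mul_comm]
      have hθj : θ ^ j * τ * (θ ^ j)⁻¹ = τ ^ k := by
        rw [hconjpow j]
        congr 1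
        have hval : ((a : ZMod p) ^ j) = (k : ZMod p) := by
          rw [← Units.val_pow_eq_pow_val, hj, hu]
        rw [hval, ZMod.val_natCast_of_lt hklt]
      set c := (θ ^ j)⁻¹ * g₁ with hcdef
      have hcτ : c * τ * c⁻¹ = τ := by
        have h3 : g₁ * τ * g₁⁻¹ = θ ^ j * τ * (θ ^ j)⁻¹ := by rw [hg₁conj, hθj]
        calc c * τ * c⁻¹ = (θ ^ j)⁻¹ * (g₁ * τ * g₁⁻¹) * θ ^ j := by rw [hcdef]; group
          _ = (θ ^ j)⁻¹ * (θ ^ j * τ * (θ ^ j)⁻¹) * θ ^ j := by rw [h3]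
          _ = τ := by group
      have hccomm : c * τ = τ * c := by
        calc c * τ = (c * τ * c⁻¹) * c := by group
          _ = τ * c := by rw [hcτ]
      have hchigh : ∀ x : Fin (p + s), p ≤ x.val → c x = x := by
        intro x hx
        rw [hcdef]
        show (θ ^ j)⁻¹ (g₁ x) = x
        rw [hg₁high x hx]
        apply (θ ^ j).injective
        rw [Equiv.Perm.coe_inv, Equiv.apply_symm_apply,
          Equiv.Perm.pow_apply_eq_self_of_apply_eq_self (hθsupp x hx)]
      have hcapp : ∀ x, c (τ x) = τ (c x) := by
        intro x
        calc c (τ x) = (c * τ) x := rfl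
          _ = (τ * c) x := by rw [hccomm]
          _ = τ (c x) := rfl
      obtain ⟨x₀, hx₀, hsame⟩ := hcyc
      have hcx₀ : τ (c x₀) ≠ c x₀ := by
        intro hfix
        apply hx₀
        apply c.injective
        rw [hcapp x₀]
        exact hfix
      obtain ⟨i, hi⟩ := hsame hcx₀
      have hC : Commute c τ := hccomm
      have hczpow : ∀ n : ℤ, ∀ x, c ((τ ^ n) x) = (τ ^ n) (c x) := by
        intro n x
        calc c ((τ ^ n) x) = (c * τ ^ n) x := rfl
          _ = (τ ^ n * c) x := by rw [(hC.zpow_right n).eq]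
          _ = (τ ^ n) (c x) := rfl
      have hcz : c = τ ^ i := by
        have hpt : ∀ x : Fin (p + s), c x = (τ ^ i) x := by
          intro x
          by_cases hx : τ x = x
          · have hxhigh : p ≤ x.val := by
              by_contra hlt
              push_neg at hlt
              have hxs : x ∈ τ.support := by rw [hsupp]; simp [hL, hlt]
              exact (Equiv.Perm.mem_support.mp hxs) hx
            rw [hchigh x hxhigh, Equiv.Perm.zpow_apply_eq_self_of_apply_eq_self hx i]
          · obtain ⟨n, hn⟩ := hsame hx
            calc c x = c ((τ ^ n) x₀) := by rw [hn]
              _ = (τ ^ n) (c x₀) := hczpow n x₀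
              _ = (τ ^ n) ((τ ^ i) x₀) := by rw [hi]
              _ = (τ ^ i) ((τ ^ n) x₀) := by
                  rw [← Equiv.Perm.mul_apply, ← Equiv.Perm.mul_apply, ← zpow_add, add_comm n i, zpow_add]
              _ = (τ ^ i) x := by rw [hn]
        ext x
        rw [hpt x]
      have hgdecomp : g = θ ^ j * c * h' := by rw [hcdef, hg_eq]; group
      rw [hgdecomp]
      refine mul_mem (mul_mem ?_ ?_) ?_
      · exact Subgroup.mem_sup_left
          (Subgroup.mem_sup_right (Subgroup.pow_mem _ (Subgroup.mem_zpowers θ) j))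
      · rw [hcz]
        exact Subgroup.mem_sup_left
          (Subgroup.mem_sup_left (Subgroup.zpow_mem _ (Subgroup.mem_zpowers τ) i))
      · exact Subgroup.mem_sup_right hh'H
  rw [keyEq, inf_comm]
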